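/- If S ⊊ ℤ² is B-stable, then any translate of the 3×2 rectangle of lattice points (3 wide, 2 tall) contains at most 2 points of S. -/

import Mathlib

/-- Embed a lattice point into the plane. -/
def toR (p : ℤ × ℤ) : ℝ × ℝ := ((p.1 : ℝ), (p.2 : ℝ))

/-- Determinant of the 2×2 matrix with columns `u`, `v`. -/
def det2 (u v : ℤ × ℤ) : ℤ := u.1 * v.2 - u.2 * v.1

/-- The set of lattice points in the (closed) triangle with vertices `a b c`. -/
def triPts (a b c : ℤ × ℤ) : Set (ℤ × ℤ) :=
  {p | toR p ∈ convexHull ℝ {toR a, toR b, toR c}}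

/-- A border triangle: a lattice triangle with exactly 4 lattice points, whose
fourth point lies on the boundary (not in the interior). -/
def IsBorderTri (T : Set (ℤ × ℤ)) : Prop :=
  ∃ a b c d : ℤ × ℤ, det2 (b - a) (c - a) ≠ 0 ∧
    T = triPts a b c ∧ T = {a, b, c, d} ∧ T.ncard = 4 ∧
    toR d ∉ interior (convexHull ℝ {toR a, toR b, toR c})

/-- An internal triangle: a lattice triangle with exactly 4 lattice points, whose
fourth point lies in the interior. -/
def IsInternalTri (T : Set (ℤ × ℤ)) : Prop :=
  ∃ a b c d : ℤ × ℤ, det2 (b - a) (c - a) ≠ 0 ∧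
    T = triPts a b c ∧ T = {a, b, c, d} ∧ T.ncard = 4 ∧
    toR d ∈ interior (convexHull ℝ {toR a, toR b, toR c})

/-- `S` is B-stable: no border triangle has exactly three of its points in `S`. -/
def BStable (S : Set (ℤ × ℤ)) : Prop :=
  ∀ T, IsBorderTri T → (T ∩ S).ncard ≠ 3

/-- `S` is I-stable: no internal triangle has exactly three of its points in `S`. -/
def IStable (S : Set (ℤ × ℤ)) : Prop :=
  ∀ T, IsInternalTri T → (T ∩ S).ncard ≠ 3

/-- Upper density of a subset of `ℤ²`. -/
noncomputable def upperDensity (S : Set (ℤ × ℤ)) : ℝ :=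
  Filter.limsup (fun n : ℕ =>
    ((S ∩ Set.Icc (-(n : ℤ), -(n : ℤ)) ((n : ℤ), (n : ℤ))).ncard : ℝ) /
      (2 * (n : ℝ) + 1) ^ 2) Filter.atTop

/-! ### Auxiliary lemmas -/

lemma BS.hull_char {A B C p : ℝ × ℝ} (hp : p ∈ convexHull ℝ ({A, B, C} : Set (ℝ × ℝ))) :
    ∃ α β γ : ℝ, 0 ≤ α ∧ 0 ≤ β ∧ 0 ≤ γ ∧ α + β + γ = 1 ∧ p = α • A + β • B + γ • C := by
  rw [convexHull_insert ⟨B, by simp⟩, convexHull_pair] at hp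
  rw [mem_convexJoin] at hp
  obtain ⟨x, hx, z, hz, hpz⟩ := hp
  simp only [Set.mem_singleton_iff] at hx
  subst hx
  obtain ⟨u1, u2, hu1, hu2, huu, hz⟩ := hz
  obtain ⟨t1, t2, ht1, ht2, htt, hp⟩ := hpz
  refine ⟨t1, t2 * u1, t2 * u2, ht1, by positivity, by positivity, by nlinarith, ?_⟩
  rw [← hp, ← hz]
  module

lemma BS.triPts_subset (a v w : ℤ × ℤ) (e : ℤ) (he : det2 v w = e) (he1 : e = 1 ∨ e = -1) :
    triPts a (a + v + v) (a + w) ⊆ {a, a + v, a + v + v, a + w} := by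
  intro p hp
  obtain ⟨α, β, γ, hα, hβ, hγ, hsum, hcomb⟩ := BS.hull_char hp
  obtain ⟨a1, a2⟩ := a; obtain ⟨v1, v2⟩ := v; obtain ⟨w1, w2⟩ := w; obtain ⟨p1, p2⟩ := p
  simp only [det2] at he
  simp only [toR, Prod.mk_add_mk, Prod.ext_iff, Prod.smul_mk, Prod.fst_add, Prod.snd_add,
    smul_eq_mul] at hcomb
  obtain ⟨hc1, hc2⟩ := hcomb
  push_cast at hc1 hc2
  have h1 : (p1 : ℝ) - a1 = 2 * β * v1 + γ * w1 := by linear_combination hc1 + (a1 : ℝ) * hsum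
  have h2 : (p2 : ℝ) - a2 = 2 * β * v2 + γ * w2 := by linear_combination hc2 + (a2 : ℝ) * hsum
  have hdet : (v1 : ℝ) * w2 - v2 * w1 = e := by exact_mod_cast congrArg (Int.cast : ℤ → ℝ) he
  have hee : (e : ℝ) * e = 1 := by rcases he1 with h | h <;> subst h <;> norm_num
  set m : ℤ := e * ((p1 - a1) * w2 - (p2 - a2) * w1) with hmdef
  set k : ℤ := e * (v1 * (p2 - a2) - v2 * (p1 - a1)) with hkdef
  have hm : (m : ℝ) = 2 * β := by
    push_cast [hmdef]
    linear_combination (e : ℝ) * w2 * h1 - (e : ℝ) * w1 * h2 + 2 * β * (e:ℝ) * hdet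
      + 2 * β * hee
  have hk : (k : ℝ) = γ := by
    push_cast [hkdef]
    linear_combination (e : ℝ) * v1 * h2 - (e : ℝ) * v2 * h1 + γ * (e:ℝ) * hdet + γ * hee
  have hm0 : 0 ≤ m := by have : (0:ℝ) ≤ (m:ℝ) := by rw [hm]; linarith
                         exact_mod_cast this
  have hk0 : 0 ≤ k := by have : (0:ℝ) ≤ (k:ℝ) := by rw [hk]; linarith
                         exact_mod_cast this
  have hmk : m + 2 * k ≤ 2 := by
    have : (m : ℝ) + 2 * k ≤ 2 := by rw [hm, hk]; linarith
    exact_mod_cast this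
  have hq1 : p1 - a1 = m * v1 + k * w1 := by
    have : ((p1 - a1 : ℤ) : ℝ) = ((m * v1 + k * w1 : ℤ) : ℝ) := by
      push_cast; rw [hm, hk]; linarith [h1]
    exact_mod_cast this
  have hq2 : p2 - a2 = m * v2 + k * w2 := by
    have : ((p2 - a2 : ℤ) : ℝ) = ((m * v2 + k * w2 : ℤ) : ℝ) := by
      push_cast; rw [hm, hk]; linarith [h2]
    exact_mod_cast this
  have hcases : m = 0 ∧ k = 0 ∨ m = 1 ∧ k = 0 ∨ m = 2 ∧ k = 0 ∨ m = 0 ∧ k = 1 := by omega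
  simp only [Set.mem_insert_iff, Set.mem_singleton_iff, Prod.mk_add_mk, Prod.mk.injEq]
  rcases hcases with ⟨h, h'⟩ | ⟨h, h'⟩ | ⟨h, h'⟩ | ⟨h, h'⟩ <;>
    rw [h, h'] at hq1 hq2 <;>
    simp only [zero_mul, one_mul, zero_add, add_zero, two_mul] at hq1 hq2 <;> omega

lemma BS.subset_triPts (a v w : ℤ × ℤ) :
    ({a, a + v, a + v + v, a + w} : Set (ℤ × ℤ)) ⊆ triPts a (a + v + v) (a + w) := by
  intro p hp
  have hA : toR a ∈ convexHull ℝ ({toR a, toR (a+v+v), toR (a+w)} : Set (ℝ × ℝ)) :=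
    subset_convexHull ℝ _ (by simp)
  have hB : toR (a+v+v) ∈ convexHull ℝ ({toR a, toR (a+v+v), toR (a+w)} : Set (ℝ × ℝ)) :=
    subset_convexHull ℝ _ (by simp)
  have hC : toR (a+w) ∈ convexHull ℝ ({toR a, toR (a+v+v), toR (a+w)} : Set (ℝ × ℝ)) :=
    subset_convexHull ℝ _ (by simp)
  have hmid : toR (a+v) ∈ convexHull ℝ ({toR a, toR (a+v+v), toR (a+w)} : Set (ℝ × ℝ)) := by
    have hseg : toR (a+v) ∈ segment ℝ (toR a) (toR (a+v+v)) := by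
      refine ⟨1/2, 1/2, by norm_num, by norm_num, by norm_num, ?_⟩
      obtain ⟨a1, a2⟩ := a; obtain ⟨v1, v2⟩ := v
      simp only [toR, Prod.mk_add_mk, Prod.smul_mk, smul_eq_mul, Prod.mk_add_mk, Prod.mk.injEq]
      push_cast
      constructor <;> ring
    exact segment_subset_convexHull (by simp) (by simp) hseg
  rcases hp with h | h | h | h <;> subst h <;> assumption

lemma BS.ne_of_det {v w : ℤ × ℤ} (e : ℤ) (he : det2 v w = e) (he1 : e = 1 ∨ e = -1) :
    v ≠ 0 ∧ w ≠ 0 ∧ w ≠ v ∧ w ≠ v + v := by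
  obtain ⟨v1, v2⟩ := v; obtain ⟨w1, w2⟩ := w
  simp only [det2] at he
  refine ⟨fun h => ?_, fun h => ?_, fun h => ?_, fun h => ?_⟩ <;>
    simp only [Prod.mk_eq_zero, Prod.mk_add_mk, Prod.mk.injEq] at h <;>
    obtain ⟨h1, h2⟩ := h <;> subst h1 <;> subst h2 <;>
    rcases he1 with h | h <;> subst h <;> nlinarith [he]

lemma BS.quad_distinct (a v w : ℤ × ℤ) (e : ℤ) (he : det2 v w = e) (he1 : e = 1 ∨ e = -1) :
    a ≠ a + v ∧ a ≠ a + v + v ∧ a ≠ a + w ∧ a + v ≠ a + v + v ∧ a + v ≠ a + w ∧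
      a + v + v ≠ a + w := by
  obtain ⟨hv, hw, hwv, hwvv⟩ := BS.ne_of_det e he he1
  have key : ∀ x y : ℤ × ℤ, x ≠ y → a + x ≠ a + y := fun x y h h' =>
    h (add_right_injective a h')
  have hvv : v + v ≠ 0 := by
    intro h; apply hv
    obtain ⟨v1, v2⟩ := v
    simp only [Prod.mk_add_mk, Prod.mk_eq_zero] at h ⊢
    omega
  refine ⟨?_, ?_, ?_, ?_, key v w (Ne.symm hwv), ?_⟩
  · intro h; exact hv (by simpa using (add_right_injective a (by simpa using h)).symm)
  · intro h; exact hvv (by rw [add_assoc] at h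
                           simpa using (add_right_injective a (by simpa using h)).symm)
  · intro h; exact hw (by simpa using (add_right_injective a (by simpa using h)).symm)
  · rw [add_assoc]; exact key v (v + v) (by intro h; exact hv (by
      obtain ⟨v1, v2⟩ := v; simp only [Prod.mk_add_mk, Prod.mk.injEq, Prod.mk_eq_zero] at h ⊢
      omega))
  · rw [add_assoc]; exact key (v + v) w (Ne.symm hwvv)

lemma BS.quad_ncard (a v w : ℤ × ℤ) (e : ℤ) (he : det2 v w = e) (he1 : e = 1 ∨ e = -1) :
    ({a, a + v, a + v + v, a + w} : Set (ℤ × ℤ)).ncard = 4 := by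
  obtain ⟨n1, n2, n3, n4, n5, n6⟩ := BS.quad_distinct a v w e he he1
  have hfin0 : ({a + w} : Set (ℤ × ℤ)).Finite := Set.finite_singleton _
  rw [Set.ncard_insert_of_notMem (by simp [n1, n2, n3])
      (Set.Finite.insert _ (Set.Finite.insert _ hfin0)),
    Set.ncard_insert_of_notMem (by simp [n4, n5]) (Set.Finite.insert _ hfin0),
    Set.ncard_insert_of_notMem (by simp [n6]) hfin0, Set.ncard_singleton]

lemma BS.not_mem_interior (a v w : ℤ × ℤ) (e : ℤ) (he : det2 v w = e) (he1 : e = 1 ∨ e = -1) :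
    toR (a + v) ∉ interior (convexHull ℝ {toR a, toR (a + v + v), toR (a + w)}) := by
  intro hmem
  obtain ⟨a1, a2⟩ := a; obtain ⟨v1, v2⟩ := v; obtain ⟨w1, w2⟩ := w
  simp only [det2] at he
  have hdet : (v1 : ℝ) * w2 - v2 * w1 = e := by exact_mod_cast congrArg (Int.cast : ℤ → ℝ) he
  have hee : (e : ℝ) * e = 1 := by rcases he1 with h | h <;> subst h <;> norm_num
  set H : Set (ℝ × ℝ) :=
    {p | 0 ≤ (-(e : ℝ) * v2) * (p.1 - (a1 : ℝ)) + ((e : ℝ) * v1) * (p.2 - (a2 : ℝ))} with hH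
  have hconv : Convex ℝ H := by
    intro x hx y hy s t hs ht hst
    simp only [hH, Set.mem_setOf_eq, Prod.fst_add, Prod.snd_add, Prod.smul_fst, Prod.smul_snd,
      smul_eq_mul] at hx hy ⊢
    have ht' : t = 1 - s := by linarith
    subst ht'
    nlinarith [mul_nonneg hs hx, mul_nonneg ht hy]
  have hsub : convexHull ℝ {toR (a1, a2), toR ((a1, a2) + (v1, v2) + (v1, v2)),
      toR ((a1, a2) + (w1, w2))} ⊆ H := by
    apply convexHull_min _ hconv
    intro p hp
    simp only [Set.mem_insert_iff, Set.mem_singleton_iff] at hp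
    rcases hp with h | h | h <;> subst h <;>
      simp only [hH, toR, Prod.mk_add_mk, Set.mem_setOf_eq] <;> push_cast
    · nlinarith []
    · nlinarith []
    · have hkey : (-(e:ℝ) * v2) * ((a1:ℝ) + w1 - a1) + ((e:ℝ) * v1) * ((a2:ℝ) + w2 - a2) = 1 := by
        linear_combination (e : ℝ) * hdet + hee
      linarith [hkey]
  have hnhds : H ∈ nhds (toR ((a1, a2) + (v1, v2))) :=
    mem_interior_iff_mem_nhds.mp (interior_mono hsub hmem)
  have hcont : Continuous fun t : ℝ =>
      toR ((a1, a2) + (v1, v2)) - t • ((-(e : ℝ) * v2, (e : ℝ) * v1) : ℝ × ℝ) := by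
    fun_prop
  have hg : Filter.Tendsto
      (fun t : ℝ => toR ((a1, a2) + (v1, v2)) - t • ((-(e : ℝ) * v2, (e : ℝ) * v1) : ℝ × ℝ))
      (nhds 0) (nhds (toR ((a1, a2) + (v1, v2)))) := by
    simpa using hcont.tendsto 0
  have hpre : (fun t : ℝ =>
      toR ((a1, a2) + (v1, v2)) - t • ((-(e : ℝ) * v2, (e : ℝ) * v1) : ℝ × ℝ)) ⁻¹' H
      ∈ nhds (0 : ℝ) := hg hnhds
  rw [Metric.mem_nhds_iff] at hpre
  obtain ⟨ε, hε, hball⟩ := hpre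
  have hb : (ε / 2 : ℝ) ∈ Metric.ball (0 : ℝ) ε := by
    simp only [Metric.mem_ball, dist_zero_right, Real.norm_eq_abs]
    rw [abs_of_pos (by linarith)]; linarith
  have hmem2 := hball hb
  simp only [Set.mem_preimage, hH, Set.mem_setOf_eq, toR, Prod.mk_add_mk, Prod.fst_sub,
    Prod.snd_sub, Prod.smul_mk, smul_eq_mul] at hmem2
  push_cast at hmem2
  have hvpos : (0 : ℝ) < v1 ^ 2 + v2 ^ 2 := by
    have hne : v1 ≠ 0 ∨ v2 ≠ 0 := by
      by_contra h
      push_neg at h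
      obtain ⟨h1, h2⟩ := h; subst h1; subst h2; simp at he; omega
    have h1 : (0:ℝ) < (v1:ℝ)^2 + (v2:ℝ)^2 := by
      rcases hne with h | h
      · have : (v1:ℝ) ≠ 0 := Int.cast_ne_zero.mpr h
        positivity
      · have : (v2:ℝ) ≠ 0 := Int.cast_ne_zero.mpr h
        positivity
    exact_mod_cast h1
  have h3 : (0:ℝ) ≤ -(ε/2) * ((e:ℝ) * e) * ((v1:ℝ)^2 + (v2:ℝ)^2) := by nlinarith [hmem2]
  rw [hee] at h3
  nlinarith [h3, hvpos, hε]

lemma BS.isBorderTri (a v w : ℤ × ℤ) (e : ℤ) (he : det2 v w = e) (he1 : e = 1 ∨ e = -1) :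
    IsBorderTri ({a, a + v, a + v + v, a + w} : Set (ℤ × ℤ)) := by
  refine ⟨a, a + v + v, a + w, a + v, ?_, ?_, ?_, BS.quad_ncard a v w e he he1,
    BS.not_mem_interior a v w e he he1⟩
  · have h2 : det2 (a + v + v - a) (a + w - a) = 2 * e := by
      obtain ⟨a1, a2⟩ := a; obtain ⟨v1, v2⟩ := v; obtain ⟨w1, w2⟩ := w
      simp only [det2] at he ⊢
      simp only [Prod.mk_add_mk, Prod.mk_sub_mk]
      ring_nf
      linear_combination 2 * he
    rw [h2]; rcases he1 with h | h <;> subst h <;> norm_num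
  · exact Set.Subset.antisymm (BS.subset_triPts a v w) (BS.triPts_subset a v w e he he1)
  · ext p
    simp only [Set.mem_insert_iff, Set.mem_singleton_iff]
    tauto

lemma BS.three_le {x y z : ℤ × ℤ} {U : Set (ℤ × ℤ)} (hU : U.Finite) (hx : x ∈ U) (hy : y ∈ U)
    (hz : z ∈ U) (h1 : x ≠ y) (h2 : x ≠ z) (h3 : y ≠ z) : 3 ≤ U.ncard := by
  have hc : ({x, y, z} : Set (ℤ × ℤ)).ncard = 3 := Set.ncard_eq_three.mpr ⟨x, y, z, h1, h2, h3, rfl⟩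
  calc 3 = ({x, y, z} : Set (ℤ × ℤ)).ncard := hc.symm
    _ ≤ U.ncard := Set.ncard_le_ncard
        (by intro t ht
            rcases ht with h | h | h <;> subst h <;> assumption) hU

lemma BS.quad_sub {S : Set (ℤ × ℤ)} (hB : BStable S) (a v w : ℤ × ℤ) (e : ℤ)
    (he : det2 v w = e) (he1 : e = 1 ∨ e = -1)
    (h3 : 3 ≤ (({a, a + v, a + v + v, a + w} : Set (ℤ × ℤ)) ∩ S).ncard) :
    ({a, a + v, a + v + v, a + w} : Set (ℤ × ℤ)) ⊆ S := by
  set T : Set (ℤ × ℤ) := {a, a + v, a + v + v, a + w} with hT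
  have hTfin : T.Finite := by
    exact Set.Finite.insert _ (Set.Finite.insert _ (Set.Finite.insert _ (Set.finite_singleton _)))
  have hne := hB T (BS.isBorderTri a v w e he he1)
  have h4 : (T ∩ S).ncard ≤ 4 := by
    rw [← BS.quad_ncard a v w e he he1]
    exact Set.ncard_le_ncard Set.inter_subset_left hTfin
  have heq : (T ∩ S).ncard = 4 := by omega
  have hsub : T ∩ S = T := by
    apply Set.eq_of_subset_of_ncard_le Set.inter_subset_left _ hTfin
    rw [heq, BS.quad_ncard a v w e he he1]
  intro x hx
  rw [← hsub] at hx
  exact hx.2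

lemma BS.quad_rule {S : Set (ℤ × ℤ)} (hB : BStable S) (a v w : ℤ × ℤ) (e : ℤ)
    (he : det2 v w = e) (he1 : e = 1 ∨ e = -1) :
    (a ∈ S → a + v ∈ S → a + v + v ∈ S → a + w ∈ S) ∧
    (a ∈ S → a + v ∈ S → a + w ∈ S → a + v + v ∈ S) ∧
    (a ∈ S → a + v + v ∈ S → a + w ∈ S → a + v ∈ S) ∧
    (a + v ∈ S → a + v + v ∈ S → a + w ∈ S → a ∈ S) := by
  obtain ⟨n1, n2, n3, n4, n5, n6⟩ := BS.quad_distinct a v w e he he1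
  set T : Set (ℤ × ℤ) := {a, a + v, a + v + v, a + w} with hT
  have hTfin : T.Finite :=
    Set.Finite.insert _ (Set.Finite.insert _ (Set.Finite.insert _ (Set.finite_singleton _)))
  have hfin : (T ∩ S).Finite := hTfin.subset Set.inter_subset_left
  have mem1 : a ∈ T := by simp [hT]
  have mem2 : a + v ∈ T := by simp [hT]
  have mem3 : a + v + v ∈ T := by simp [hT]
  have mem4 : a + w ∈ T := by simp [hT]
  refine ⟨fun h1 h2 h3 => ?_, fun h1 h2 h3 => ?_, fun h1 h2 h3 => ?_, fun h1 h2 h3 => ?_⟩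
  · exact BS.quad_sub hB a v w e he he1
      (BS.three_le hfin ⟨mem1, h1⟩ ⟨mem2, h2⟩ ⟨mem3, h3⟩ n1 n2 n4) mem4
  · exact BS.quad_sub hB a v w e he he1
      (BS.three_le hfin ⟨mem1, h1⟩ ⟨mem2, h2⟩ ⟨mem4, h3⟩ n1 n3 n5) mem3
  · exact BS.quad_sub hB a v w e he he1
      (BS.three_le hfin ⟨mem1, h1⟩ ⟨mem3, h2⟩ ⟨mem4, h3⟩ n2 n3 n6) mem2
  · exact BS.quad_sub hB a v w e he he1
      (BS.three_le hfin ⟨mem2, h1⟩ ⟨mem3, h2⟩ ⟨mem4, h3⟩ n4 n5 n6) mem1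

lemma BS.memS {S : Set (ℤ × ℤ)} {u1 u2 t1 t2 : ℤ} (h : (u1, u2) ∈ S) (h1 : t1 = u1)
    (h2 : t2 = u2) : (t1, t2) ∈ S := by subst h1; subst h2; exact h

lemma BS.triple_univ {S : Set (ℤ × ℤ)} (hB : BStable S) (x1 x2 v1 v2 w1 w2 : ℤ)
    (he : v1 * w2 - v2 * w1 = 1) (h0 : (x1, x2) ∈ S) (h1 : (x1 + v1, x2 + v2) ∈ S)
    (h2 : (x1 + v1 + v1, x2 + v2 + v2) ∈ S) : S = Set.univ := by
  set P : ℤ → ℤ → Prop := fun m k => (x1 + m * v1 + k * w1, x2 + m * v2 + k * w2) ∈ S with hP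
  have hAdj : ∀ m k n : ℤ, P m k → P (m + 1) k → P (m + 2) k → P n (k + 1) ∧ P n (k - 1) := by
    intro m k n hm hm1 hm2
    constructor
    · have hd : det2 (v1, v2) ((n - m) * v1 + w1, (n - m) * v2 + w2) = 1 := by
        simp only [det2]; ring_nf; linear_combination he
      have rule := (BS.quad_rule hB (x1 + m * v1 + k * w1, x2 + m * v2 + k * w2) (v1, v2)
        ((n - m) * v1 + w1, (n - m) * v2 + w2) 1 hd (Or.inl rfl)).1
      simp only [Prod.mk_add_mk] at rule
      exact BS.memS (rule hm (BS.memS hm1 (by ring) (by ring)) (BS.memS hm2 (by ring) (by ring)))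
        (by ring) (by ring)
    · have hd : det2 (v1, v2) ((n - m) * v1 - w1, (n - m) * v2 - w2) = -1 := by
        simp only [det2]; ring_nf; linear_combination -he
      have rule := (BS.quad_rule hB (x1 + m * v1 + k * w1, x2 + m * v2 + k * w2) (v1, v2)
        ((n - m) * v1 - w1, (n - m) * v2 - w2) (-1) hd (Or.inr rfl)).1
      simp only [Prod.mk_add_mk] at rule
      exact BS.memS (rule hm (BS.memS hm1 (by ring) (by ring)) (BS.memS hm2 (by ring) (by ring)))
        (by ring) (by ring)
  have hExt : ∀ m k : ℤ, P m k → P (m + 1) k → P (m + 2) k → P (m + 3) k ∧ P (m - 1) k := by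
    intro m k hm hm1 hm2
    have hup : P m (k + 1) := (hAdj m k m hm hm1 hm2).1
    constructor
    · have hd : det2 (v1, v2) (w1 - v1, w2 - v2) = 1 := by
        simp only [det2]; ring_nf; linear_combination he
      have rule := (BS.quad_rule hB (x1 + (m + 1) * v1 + k * w1, x2 + (m + 1) * v2 + k * w2)
        (v1, v2) (w1 - v1, w2 - v2) 1 hd (Or.inl rfl)).2.1
      simp only [Prod.mk_add_mk] at rule
      exact BS.memS (rule hm1 (BS.memS hm2 (by ring) (by ring)) (BS.memS hup (by ring) (by ring)))
        (by ring) (by ring)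
    · have hd : det2 (v1, v2) (v1 + w1, v2 + w2) = 1 := by
        simp only [det2]; ring_nf; linear_combination he
      have rule := (BS.quad_rule hB (x1 + (m - 1) * v1 + k * w1, x2 + (m - 1) * v2 + k * w2)
        (v1, v2) (v1 + w1, v2 + w2) 1 hd (Or.inl rfl)).2.2.2
      simp only [Prod.mk_add_mk] at rule
      exact rule (BS.memS hm (by ring) (by ring)) (BS.memS hm1 (by ring) (by ring))
        (BS.memS hup (by ring) (by ring))
  have hLine : ∀ m : ℤ, P m 0 ∧ P (m + 1) 0 ∧ P (m + 2) 0 := by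
    intro m
    induction m using Int.induction_on with
    | zero => exact ⟨BS.memS h0 (by ring) (by ring), BS.memS h1 (by ring) (by ring),
        BS.memS h2 (by ring) (by ring)⟩
    | succ i ih =>
      refine ⟨BS.memS ih.2.1 (by ring) (by ring), BS.memS ih.2.2 (by ring) (by ring), ?_⟩
      have := (hExt i 0 ih.1 ih.2.1 ih.2.2).1
      exact BS.memS this (by ring) (by ring)
    | pred i ih =>
      refine ⟨?_, BS.memS ih.1 (by ring) (by ring), BS.memS ih.2.1 (by ring) (by ring)⟩
      have := (hExt (-i) 0 (BS.memS ih.1 (by ring) (by ring))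
        (BS.memS ih.2.1 (by ring) (by ring)) (BS.memS ih.2.2 (by ring) (by ring))).2
      exact BS.memS this (by ring) (by ring)
  have hAll : ∀ k m : ℤ, P m k := by
    intro k
    induction k using Int.induction_on with
    | zero => exact fun m => (hLine m).1
    | succ i ih => intro m
                   have := (hAdj 0 i m (BS.memS (ih 0) (by ring) (by ring))
                     (BS.memS (ih 1) (by ring) (by ring)) (BS.memS (ih 2) (by ring) (by ring))).1
                   exact BS.memS this (by ring) (by ring)
    | pred i ih => intro m
                   have := (hAdj 0 (-i) m (BS.memS (ih 0) (by ring) (by ring))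
                     (BS.memS (ih 1) (by ring) (by ring)) (BS.memS (ih 2) (by ring) (by ring))).2
                   exact BS.memS this (by ring) (by ring)
  apply Set.eq_univ_iff_forall.mpr
  intro p
  obtain ⟨p1, p2⟩ := p
  exact BS.memS (hAll (v1 * (p2 - x2) - v2 * (p1 - x1)) ((p1 - x1) * w2 - (p2 - x2) * w1))
    (by linear_combination -(p1 - x1) * he) (by linear_combination -(p2 - x2) * he)

lemma BS.pair_univ {S : Set (ℤ × ℤ)} (hB : BStable S) (x1 x2 v1 v2 w1 w2 e : ℤ)
    (he : v1 * w2 - v2 * w1 = e) (he1 : e = 1 ∨ e = -1) (h0 : (x1, x2) ∈ S)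
    (h1 : (x1 + v1, x2 + v2) ∈ S) (hw : (x1 + w1, x2 + w2) ∈ S) : S = Set.univ := by
  have hd : det2 (v1, v2) (w1, w2) = e := by simp only [det2]; linear_combination he
  have rule := (BS.quad_rule hB (x1, x2) (v1, v2) (w1, w2) e hd he1).2.1
  simp only [Prod.mk_add_mk] at rule
  have h2 := rule h0 h1 hw
  rcases he1 with h | h
  · subst h
    exact BS.triple_univ hB x1 x2 v1 v2 w1 w2 he h0 h1 h2
  · subst h
    exact BS.triple_univ hB x1 x2 v1 v2 (-w1) (-w2) (by linear_combination -he) h0 h1 h2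

lemma BS.mid_univ {S : Set (ℤ × ℤ)} (hB : BStable S) (x1 x2 v1 v2 w1 w2 e : ℤ)
    (he : v1 * w2 - v2 * w1 = e) (he1 : e = 1 ∨ e = -1) (h0 : (x1, x2) ∈ S)
    (h2 : (x1 + v1 + v1, x2 + v2 + v2) ∈ S) (hw : (x1 + w1, x2 + w2) ∈ S) : S = Set.univ := by
  have hd : det2 (v1, v2) (w1, w2) = e := by simp only [det2]; linear_combination he
  have rule := (BS.quad_rule hB (x1, x2) (v1, v2) (w1, w2) e hd he1).2.2.1
  simp only [Prod.mk_add_mk] at rule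
  exact BS.pair_univ hB x1 x2 v1 v2 w1 w2 e he he1 h0 (rule h0 h2 hw) hw

lemma BS.case_samerow {S : Set (ℤ × ℤ)} (hB : BStable S) (p1 p2 q1 q2 r1 r2 a : ℤ)
    (hp : (p1, p2) ∈ S) (hq : (q1, q2) ∈ S) (hr : (r1, r2) ∈ S)
    (hb1 : a + 1 ≤ p1) (hb2 : p1 ≤ a + 3) (hb3 : a + 1 ≤ q1) (hb4 : q1 ≤ a + 3)
    (hrow : q2 = p2) (hne : p1 ≠ q1) (hoff : r2 = p2 + 1 ∨ r2 = p2 - 1) : S = Set.univ := by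
  have he1 : r2 - p2 = 1 ∨ r2 - p2 = -1 := by omega
  have he1' : -(r2 - p2) = 1 ∨ -(r2 - p2) = -1 := by omega
  have hd : q1 = p1 + 1 ∨ q1 = p1 - 1 ∨ q1 = p1 + 2 ∨ q1 = p1 - 2 := by omega
  rcases hd with h | h | h | h
  · exact BS.pair_univ hB p1 p2 1 0 (r1 - p1) (r2 - p2) (r2 - p2) (by ring) he1 hp
      (BS.memS hq (by omega) (by omega)) (BS.memS hr (by ring) (by ring))
  · exact BS.pair_univ hB p1 p2 (-1) 0 (r1 - p1) (r2 - p2) (-(r2 - p2)) (by ring) he1' hp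
      (BS.memS hq (by omega) (by omega)) (BS.memS hr (by ring) (by ring))
  · exact BS.mid_univ hB p1 p2 1 0 (r1 - p1) (r2 - p2) (r2 - p2) (by ring) he1 hp
      (BS.memS hq (by omega) (by omega)) (BS.memS hr (by ring) (by ring))
  · exact BS.mid_univ hB p1 p2 (-1) 0 (r1 - p1) (r2 - p2) (-(r2 - p2)) (by ring) he1' hp
      (BS.memS hq (by omega) (by omega)) (BS.memS hr (by ring) (by ring))

lemma BS.case_allrow {S : Set (ℤ × ℤ)} (hB : BStable S) (p1 p2 q1 q2 r1 r2 a : ℤ)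
    (hp : (p1, p2) ∈ S) (hq : (q1, q2) ∈ S) (hr : (r1, r2) ∈ S)
    (hb1 : a + 1 ≤ p1) (hb2 : p1 ≤ a + 3) (hb3 : a + 1 ≤ q1) (hb4 : q1 ≤ a + 3)
    (hb5 : a + 1 ≤ r1) (hb6 : r1 ≤ a + 3)
    (hrow1 : q2 = p2) (hrow2 : r2 = p2) (hne1 : p1 ≠ q1) (hne2 : p1 ≠ r1) (hne3 : q1 ≠ r1) :
    S = Set.univ := by
  have m1 : (a + 1, p2) ∈ S := by
    rcases (show p1 = a + 1 ∨ q1 = a + 1 ∨ r1 = a + 1 by omega) with h | h | h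
    · exact BS.memS hp (by omega) rfl
    · exact BS.memS hq (by omega) (by omega)
    · exact BS.memS hr (by omega) (by omega)
  have m2 : (a + 2, p2) ∈ S := by
    rcases (show p1 = a + 2 ∨ q1 = a + 2 ∨ r1 = a + 2 by omega) with h | h | h
    · exact BS.memS hp (by omega) rfl
    · exact BS.memS hq (by omega) (by omega)
    · exact BS.memS hr (by omega) (by omega)
  have m3 : (a + 3, p2) ∈ S := by
    rcases (show p1 = a + 3 ∨ q1 = a + 3 ∨ r1 = a + 3 by omega) with h | h | h
    · exact BS.memS hp (by omega) rfl
    · exact BS.memS hq (by omega) (by omega)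
    · exact BS.memS hr (by omega) (by omega)
  exact BS.triple_univ hB (a + 1) p2 1 0 0 1 (by norm_num) (BS.memS m1 rfl rfl)
    (BS.memS m2 (by ring) (by ring)) (BS.memS m3 (by ring) (by ring))

theorem stmt10 (S : Set (ℤ × ℤ)) (hS : S ≠ Set.univ) (hB : BStable S) :
    ∀ a b : ℤ, (S ∩ Set.Icc (a + 1, b + 1) (a + 3, b + 2)).ncard ≤ 2 := by
  intro a b
  by_contra hcon
  push_neg at hcon
  have h3 : 3 ≤ (S ∩ Set.Icc (a + 1, b + 1) (a + 3, b + 2)).ncard := hcon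
  obtain ⟨t, hts, htc⟩ := Set.exists_subset_card_eq h3
  obtain ⟨x, y, z, hxy, hxz, hyz, rfl⟩ := Set.ncard_eq_three.mp htc
  have hx := hts (show x ∈ ({x, y, z} : Set (ℤ × ℤ)) by simp)
  have hy := hts (show y ∈ ({x, y, z} : Set (ℤ × ℤ)) by simp)
  have hz := hts (show z ∈ ({x, y, z} : Set (ℤ × ℤ)) by simp)
  obtain ⟨x1, x2⟩ := x; obtain ⟨y1, y2⟩ := y; obtain ⟨z1, z2⟩ := z
  obtain ⟨hxS, hxI⟩ := hx
  obtain ⟨hyS, hyI⟩ := hy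
  obtain ⟨hzS, hzI⟩ := hz
  simp only [Set.mem_Icc, Prod.le_def] at hxI hyI hzI
  obtain ⟨⟨bx1, bx2⟩, ⟨bx3, bx4⟩⟩ := hxI
  obtain ⟨⟨by1, by2⟩, ⟨by3, by4⟩⟩ := hyI
  obtain ⟨⟨bz1, bz2⟩, ⟨bz3, bz4⟩⟩ := hzI
  apply hS
  rcases (show x2 = b + 1 ∨ x2 = b + 2 by omega) with hx2 | hx2 <;>
  rcases (show y2 = b + 1 ∨ y2 = b + 2 by omega) with hy2 | hy2 <;>
  rcases (show z2 = b + 1 ∨ z2 = b + 2 by omega) with hz2 | hz2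
  · -- all in row b+1
    exact BS.case_allrow hB x1 x2 y1 y2 z1 z2 a hxS hyS hzS bx1 bx3 by1 by3 bz1 bz3
      (by omega) (by omega)
      (fun h => hxy (by simp only [Prod.mk.injEq]; omega))
      (fun h => hxz (by simp only [Prod.mk.injEq]; omega))
      (fun h => hyz (by simp only [Prod.mk.injEq]; omega))
  · -- x,y row 1; z row 2
    exact BS.case_samerow hB x1 x2 y1 y2 z1 z2 a hxS hyS hzS bx1 bx3 by1 by3 (by omega)
      (fun h => hxy (by simp only [Prod.mk.injEq]; omega)) (by omega)
  · -- x,z row 1; y row 2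
    exact BS.case_samerow hB x1 x2 z1 z2 y1 y2 a hxS hzS hyS bx1 bx3 bz1 bz3 (by omega)
      (fun h => hxz (by simp only [Prod.mk.injEq]; omega)) (by omega)
  · -- y,z row 2... x row 1: pair (y,z)
    exact BS.case_samerow hB y1 y2 z1 z2 x1 x2 a hyS hzS hxS by1 by3 bz1 bz3 (by omega)
      (fun h => hyz (by simp only [Prod.mk.injEq]; omega)) (by omega)
  · -- x row 2; y,z row 1
    exact BS.case_samerow hB y1 y2 z1 z2 x1 x2 a hyS hzS hxS by1 by3 bz1 bz3 (by omega)
      (fun h => hyz (by simp only [Prod.mk.injEq]; omega)) (by omega)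
  · -- x,z row 2; y row 1
    exact BS.case_samerow hB x1 x2 z1 z2 y1 y2 a hxS hzS hyS bx1 bx3 bz1 bz3 (by omega)
      (fun h => hxz (by simp only [Prod.mk.injEq]; omega)) (by omega)
  · -- x,y row 2; z row 1
    exact BS.case_samerow hB x1 x2 y1 y2 z1 z2 a hxS hyS hzS bx1 bx3 by1 by3 (by omega)
      (fun h => hxy (by simp only [Prod.mk.injEq]; omega)) (by omega)
  · -- all row 2
    exact BS.case_allrow hB x1 x2 y1 y2 z1 z2 a hxS hyS hzS bx1 bx3 by1 by3 bz1 bz3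
      (by omega) (by omega)
      (fun h => hxy (by simp only [Prod.mk.injEq]; omega))
      (fun h => hxz (by simp only [Prod.mk.injEq]; omega))
      (fun h => hyz (by simp only [Prod.mk.injEq]; omega))
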